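/- If the QFI of a mixed state ρ is defined by the convex roof F_Q[ρ;H] = inf over ensembles {p_i, |ψ_i⟩} with Σ p_i|ψ_i⟩⟨ψ_i| = ρ of Σ p_i F_Q[|ψ_i⟩;H], and the pure-state continuity bound |F_Q[|ψ⟩;H] − F_Q[|φ⟩;H]| ≤ 24√(1−|⟨ψ|φ⟩|²)‖H‖² holds, then for any mixed ρ and pure |φ⟩: |F_Q[ρ;H] − F_Q[|φ⟩;H]| ≤ 24·√(1 − F(ρ,|φ⟩)²)·‖H‖², where F(ρ,|φ⟩)² = ⟨φ|ρ|φ⟩. -/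

import Mathlib

open scoped BigOperators ComplexConjugate ComplexOrder Matrix

noncomputable section

/-- The rank-one projector `|ψ⟩⟨ψ|` as a matrix. -/
def projv {ι : Type*} [Fintype ι] (ψ : ι → ℂ) : Matrix ι ι ℂ :=
  Matrix.vecMulVec ψ (star ψ)

/-- The inner product `⟨ψ|φ⟩`. -/
def ipc {ι : Type*} [Fintype ι] (ψ φ : ι → ℂ) : ℂ :=
  dotProduct (star ψ) φ

-- Square root of a positive semidefinite matrix (junk value `0` otherwise).
open Classical in
def msqrt {ι : Type*} [Fintype ι] [DecidableEq ι] (A : Matrix ι ι ℂ) : Matrix ι ι ℂ :=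
  if h : A.PosSemidef then
    (h.1.eigenvectorUnitary : Matrix ι ι ℂ) *
      Matrix.diagonal ((↑) ∘ (Real.sqrt ·) ∘ h.1.eigenvalues) *
      (star h.1.eigenvectorUnitary : Matrix ι ι ℂ)
  else 0

/-- Trace norm `‖X‖₁ = Tr √(X†X)`. -/
def traceNorm {ι : Type*} [Fintype ι] [DecidableEq ι] (A : Matrix ι ι ℂ) : ℝ :=
  (msqrt (Aᴴ * A)).trace.re

/-- Uhlmann fidelity `F(ρ,σ) = Tr √(√σ ρ √σ)`. -/
def fid {ι : Type*} [Fintype ι] [DecidableEq ι] (ρ σ : Matrix ι ι ℂ) : ℝ :=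
  (msqrt (msqrt σ * ρ * msqrt σ)).trace.re

/-- Operator (spectral) norm of a matrix. -/
def opNorm {ι : Type*} [Fintype ι] [DecidableEq ι] (A : Matrix ι ι ℂ) : ℝ :=
  ‖Matrix.toEuclideanCLM (𝕜 := ℂ) A‖

/-- Expectation value `⟨ψ|H|ψ⟩` (real part). -/
def exval {ι : Type*} [Fintype ι] (ψ : ι → ℂ) (H : Matrix ι ι ℂ) : ℝ :=
  (ipc ψ (H.mulVec ψ)).re

/-- Pure-state quantum Fisher information `4(⟨H²⟩ - ⟨H⟩²)`. -/
def QFIpure {ι : Type*} [Fintype ι] (ψ : ι → ℂ) (H : Matrix ι ι ℂ) : ℝ :=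
  4 * (exval ψ (H * H) - (exval ψ H) ^ 2)

/-- Density matrix predicate. -/
def IsDensity {ι : Type*} [Fintype ι] [DecidableEq ι] (ρ : Matrix ι ι ℂ) : Prop :=
  ρ.PosSemidef ∧ ρ.trace = 1

/-- Convex-roof quantum Fisher information of a mixed state. -/
def roofQFI {ι : Type*} [Fintype ι] [DecidableEq ι] (ρ H : Matrix ι ι ℂ) : ℝ :=
  sInf {x : ℝ | ∃ (m : ℕ) (p : Fin m → ℝ) (ψ : Fin m → ι → ℂ),
    (∀ i, 0 ≤ p i) ∧ (∀ i, ipc (ψ i) (ψ i) = 1) ∧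
    (∑ i, (p i : ℂ) • projv (ψ i)) = ρ ∧ x = ∑ i, p i * QFIpure (ψ i) H}

-- helpers
lemma ipc_eq_inner {n : ℕ} (ψ φ : Fin n → ℂ) :
    ipc ψ φ = inner (𝕜 := ℂ) ((WithLp.equiv 2 (Fin n → ℂ)).symm ψ)
      ((WithLp.equiv 2 (Fin n → ℂ)).symm φ) := by
  rw [EuclideanSpace.inner_eq_star_dotProduct, dotProduct_comm]; rfl

lemma norm_eq_one_of_ipc {n : ℕ} {ψ : Fin n → ℂ} (h : ipc ψ ψ = 1) :
    ‖(WithLp.equiv 2 (Fin n → ℂ)).symm ψ‖ = 1 := by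
  have h2 := (ipc_eq_inner ψ ψ).symm.trans h
  have h3 : (‖(WithLp.equiv 2 (Fin n → ℂ)).symm ψ‖ : ℝ) ^ 2 = 1 := by
    have := @inner_self_eq_norm_sq ℂ _ _ _ _ ((WithLp.equiv 2 (Fin n → ℂ)).symm ψ)
    rw [h2] at this
    simpa using this.symm
  nlinarith [norm_nonneg ((WithLp.equiv 2 (Fin n → ℂ)).symm ψ)]

lemma norm_ipc_le_one {n : ℕ} {ψ φ : Fin n → ℂ} (hψ : ipc ψ ψ = 1) (hφ : ipc φ φ = 1) :
    ‖ipc ψ φ‖ ≤ 1 := by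
  rw [ipc_eq_inner]
  calc ‖inner (𝕜 := ℂ) ((WithLp.equiv 2 (Fin n → ℂ)).symm ψ) ((WithLp.equiv 2 (Fin n → ℂ)).symm φ)‖
      ≤ ‖(WithLp.equiv 2 (Fin n → ℂ)).symm ψ‖ * ‖(WithLp.equiv 2 (Fin n → ℂ)).symm φ‖ :=
        norm_inner_le_norm _ _
    _ = 1 := by rw [norm_eq_one_of_ipc hψ, norm_eq_one_of_ipc hφ, mul_one]

lemma ipc_conj {n : ℕ} (ψ φ : Fin n → ℂ) : (starRingEnd ℂ) (ipc ψ φ) = ipc φ ψ := by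
  simp [ipc, dotProduct, Finset.sum_comm, map_sum, mul_comm]

lemma ipc_proj {n : ℕ} (ψ φ : Fin n → ℂ) :
    ipc φ ((projv ψ).mulVec φ) = (‖ipc ψ φ‖ : ℂ) ^ 2 := by
  have : ipc φ ((projv ψ).mulVec φ) = ipc φ ψ * ipc ψ φ := by
    simp only [ipc, projv, dotProduct, Matrix.mulVec, Matrix.vecMulVec_apply,
      Finset.sum_mul, Finset.mul_sum, Pi.star_apply]
    rw [Finset.sum_comm]
    congr 1; ext j; congr 1; ext i; ring
  rw [this, ← ipc_conj ψ φ, ← Complex.normSq_eq_conj_mul_self, Complex.normSq_eq_norm_sq]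
  norm_cast

-- concavity via Cauchy-Schwarz
lemma sum_sqrt_le {m : ℕ} (p a : Fin m → ℝ) (hp : ∀ i, 0 ≤ p i) (hp1 : ∑ i, p i = 1)
    (ha : ∀ i, a i ≤ 1) :
    ∑ i, p i * Real.sqrt (1 - a i) ≤ Real.sqrt (1 - ∑ i, p i * a i) := by
  have key : (∑ i, p i * Real.sqrt (1 - a i)) ^ 2 ≤ 1 - ∑ i, p i * a i := by
    have cs := Finset.sum_mul_sq_le_sq_mul_sq Finset.univ
      (fun i => Real.sqrt (p i)) (fun i => Real.sqrt (p i * (1 - a i)))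
    have e1 : ∀ i, Real.sqrt (p i) * Real.sqrt (p i * (1 - a i)) = p i * Real.sqrt (1 - a i) := by
      intro i
      rw [Real.sqrt_mul (hp i), ← mul_assoc, Real.mul_self_sqrt (hp i)]
    have e2 : ∀ i, Real.sqrt (p i) ^ 2 = p i := fun i => Real.sq_sqrt (hp i)
    have e3 : ∀ i, Real.sqrt (p i * (1 - a i)) ^ 2 = p i * (1 - a i) := fun i =>
      Real.sq_sqrt (mul_nonneg (hp i) (by linarith [ha i]))
    simp only [e1, e2, e3] at cs
    calc (∑ i, p i * Real.sqrt (1 - a i)) ^ 2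
        ≤ (∑ i, p i) * ∑ i, p i * (1 - a i) := cs
      _ = 1 - ∑ i, p i * a i := by
          rw [hp1, one_mul]
          simp only [mul_sub, mul_one, Finset.sum_sub_distrib, hp1]
    
  have hnn : 0 ≤ ∑ i, p i * Real.sqrt (1 - a i) :=
    Finset.sum_nonneg fun i _ => mul_nonneg (hp i) (Real.sqrt_nonneg _)
  exact (Real.le_sqrt hnn (le_trans (sq_nonneg _) key)).mpr key

lemma sum_rank_one {n : ℕ} (ρ : Matrix (Fin n) (Fin n) ℂ) (hρ : ρ.PosSemidef) :
    ∑ i, ((hρ.1.eigenvalues i : ℝ) : ℂ) • projv (⇑(hρ.1.eigenvectorBasis i)) = ρ := by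
  conv_rhs => rw [hρ.1.spectral_theorem, Unitary.conjStarAlgAut_apply]
  ext a b
  rw [Matrix.sum_apply, Matrix.mul_apply]
  refine Finset.sum_congr rfl fun k _ => ?_
  simp only [Matrix.smul_apply, projv, Matrix.vecMulVec_apply, Pi.star_apply, smul_eq_mul,
    Matrix.mul_diagonal, Matrix.star_apply, Matrix.IsHermitian.eigenvectorUnitary_apply,
    Function.comp_apply, RCLike.star_def]
  have hco : ((RCLike.ofReal : ℝ → ℂ) = Complex.ofReal) := rfl
  rw [hco] at *
  ring

lemma trace_projv {n : ℕ} (ψ : Fin n → ℂ) : (projv ψ).trace = ipc ψ ψ := by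
  simp [projv, Matrix.trace, Matrix.diag, ipc, dotProduct, Matrix.vecMulVec_apply,
    mul_comm]

/-- the convex-roof QFI of a mixed state is continuous with respect to a
pure state: `|F_Q[ρ;H] − F_Q[φ;H]| ≤ 24√(1 − ⟨φ|ρ|φ⟩)‖H‖²`, given the pure-state
continuity bound. -/
theorem roofQFI_continuity_pure {n : ℕ} (ρ : Matrix (Fin n) (Fin n) ℂ) (hρ : IsDensity ρ)
    (H : Matrix (Fin n) (Fin n) ℂ) (hH : H.IsHermitian)
    (φ : Fin n → ℂ) (hφ : ipc φ φ = 1)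
    (hcont : ∀ ψ χ : Fin n → ℂ, ipc ψ ψ = 1 → ipc χ χ = 1 →
      |QFIpure ψ H - QFIpure χ H| ≤ 24 * Real.sqrt (1 - ‖ipc ψ χ‖ ^ 2) * opNorm H ^ 2) :
    |roofQFI ρ H - QFIpure φ H| ≤
      24 * Real.sqrt (1 - (ipc φ (ρ.mulVec φ)).re) * opNorm H ^ 2 := by
  set S : Set ℝ := {x : ℝ | ∃ (m : ℕ) (p : Fin m → ℝ) (ψ : Fin m → Fin n → ℂ),
    (∀ i, 0 ≤ p i) ∧ (∀ i, ipc (ψ i) (ψ i) = 1) ∧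
    (∑ i, (p i : ℂ) • projv (ψ i)) = ρ ∧ x = ∑ i, p i * QFIpure (ψ i) H} with hS
  set B : ℝ := 24 * Real.sqrt (1 - (ipc φ (ρ.mulVec φ)).re) * opNorm H ^ 2 with hB
  -- every ensemble value is within B of QFIpure φ H
  have hbound : ∀ x ∈ S, |x - QFIpure φ H| ≤ B := by
    rintro x ⟨m, p, ψ, hp, hunit, hens, rfl⟩
    set a : Fin m → ℝ := fun i => ‖ipc (ψ i) φ‖ ^ 2 with ha
    have ha1 : ∀ i, a i ≤ 1 := by
      intro i
      have h1 := norm_ipc_le_one (hunit i) hφ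
      have h0 := norm_nonneg (ipc (ψ i) φ)
      simp only [ha]
      nlinarith
    -- sum of p is 1
    have htr : (∑ i, (p i : ℂ)) = 1 := by
      have h := congrArg Matrix.trace hens
      rw [Matrix.trace_sum] at h
      simp only [Matrix.trace_smul, trace_projv, hunit, smul_eq_mul, mul_one] at h
      rw [h, hρ.2]
    have hp1 : ∑ i, p i = 1 := by
      have : ((∑ i, p i : ℝ) : ℂ) = 1 := by push_cast; exact htr
      exact_mod_cast this
    -- key identity: ∑ p i * a i = ⟨φ|ρ|φ⟩.re
    have hkey : ∑ i, p i * a i = (ipc φ (ρ.mulVec φ)).re := by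
      have h := congrArg (fun M : Matrix (Fin n) (Fin n) ℂ => ipc φ (M.mulVec φ)) hens
      have hlin : ((∑ i, (p i : ℂ) • projv (ψ i)) *ᵥ φ) = ∑ i, ((p i : ℂ) • projv (ψ i)) *ᵥ φ := by
        ext j
        rw [Finset.sum_apply]
        simp only [Matrix.mulVec, dotProduct, Matrix.sum_apply, Finset.sum_mul]
        rw [Finset.sum_comm]
      rw [hlin] at h
      have h2 : ∀ i, ipc φ (((p i : ℂ) • projv (ψ i)).mulVec φ)
          = (p i : ℂ) * (‖ipc (ψ i) φ‖ : ℂ) ^ 2 := by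
        intro i
        rw [Matrix.smul_mulVec]
        have : ipc φ ((p i : ℂ) • ((projv (ψ i)).mulVec φ))
            = (p i : ℂ) * ipc φ ((projv (ψ i)).mulVec φ) := by
          simp only [ipc, dotProduct, Pi.smul_apply, smul_eq_mul, Finset.mul_sum]
          exact Finset.sum_congr rfl fun j _ => by ring
        rw [this, ipc_proj]
      have h3 : ipc φ ((∑ i, ((p i : ℂ) • projv (ψ i)).mulVec φ) : Fin n → ℂ)
          = ∑ i, ipc φ (((p i : ℂ) • projv (ψ i)).mulVec φ) := by
        simp only [ipc, dotProduct, Finset.sum_apply, Finset.mul_sum]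
        rw [Finset.sum_comm]
      rw [h3] at h
      simp only [h2] at h
      rw [← h]
      rw [Complex.re_sum]
      refine Finset.sum_congr rfl fun i _ => ?_
      have hc : ((p i : ℂ) * (‖ipc (ψ i) φ‖ : ℂ) ^ 2)
          = ((p i * ‖ipc (ψ i) φ‖ ^ 2 : ℝ) : ℂ) := by push_cast; ring
      rw [hc, Complex.ofReal_re]
    -- difference as a convex combination
    have hdiff : ∑ i, p i * QFIpure (ψ i) H - QFIpure φ H
        = ∑ i, p i * (QFIpure (ψ i) H - QFIpure φ H) := by
      simp only [mul_sub, Finset.sum_sub_distrib, ← Finset.sum_mul, hp1, one_mul]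
    rw [hdiff]
    calc |∑ i, p i * (QFIpure (ψ i) H - QFIpure φ H)|
        ≤ ∑ i, |p i * (QFIpure (ψ i) H - QFIpure φ H)| := Finset.abs_sum_le_sum_abs _ _
      _ ≤ ∑ i, p i * (24 * Real.sqrt (1 - a i) * opNorm H ^ 2) := by
          refine Finset.sum_le_sum fun i _ => ?_
          rw [abs_mul, abs_of_nonneg (hp i)]
          exact mul_le_mul_of_nonneg_left (hcont (ψ i) φ (hunit i) hφ) (hp i)
      _ = (24 * opNorm H ^ 2) * ∑ i, p i * Real.sqrt (1 - a i) := by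
          rw [Finset.mul_sum]; refine Finset.sum_congr rfl fun i _ => by ring
      _ ≤ (24 * opNorm H ^ 2) * Real.sqrt (1 - ∑ i, p i * a i) := by
          refine mul_le_mul_of_nonneg_left (sum_sqrt_le p a hp hp1 ha1) (by positivity)
      _ = B := by rw [hkey, hB]; ring
  -- nonemptiness via spectral decomposition
  have hpsd := hρ.1
  have hx0 : (∑ i, hpsd.1.eigenvalues i * QFIpure (⇑(hpsd.1.eigenvectorBasis i)) H) ∈ S := by
    refine ⟨n, fun i => hpsd.1.eigenvalues i, fun i => ⇑(hpsd.1.eigenvectorBasis i),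
      fun i => hpsd.eigenvalues_nonneg i, ?_, sum_rank_one ρ hpsd, rfl⟩
    intro i
    rw [ipc_eq_inner]
    have : (WithLp.equiv 2 (Fin n → ℂ)).symm ⇑(hpsd.1.eigenvectorBasis i)
        = hpsd.1.eigenvectorBasis i := rfl
    rw [this, inner_self_eq_norm_sq_to_K, hpsd.1.eigenvectorBasis.orthonormal.1 i]
    norm_num
  have hne : S.Nonempty := ⟨_, hx0⟩
  have hbdd : BddBelow S := by
    refine ⟨QFIpure φ H - B, fun x hx => ?_⟩
    have := hbound x hx
    rw [abs_le] at this
    linarith [this.1]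
  have hroof : roofQFI ρ H = sInf S := rfl
  rw [hroof, abs_le]
  constructor
  · have h1 : QFIpure φ H - B ≤ sInf S := by
      refine le_csInf hne fun x hx => ?_
      have := hbound x hx
      rw [abs_le] at this
      linarith [this.1]
    linarith
  · have h1 : sInf S ≤ _ := csInf_le hbdd hx0
    have h2 := hbound _ hx0
    rw [abs_le] at h2
    linarith [h2.2]
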